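/- Let d ≥ 1, τ > 0, let K : ℝ × ℝ^d × ℝ^d → ℝ^d be continuously differentiable, let x, y : ℝ → ℝ^d be continuous, and fix t ∈ ℝ. Define g : (0, ∞) → ℝ^d by g(ω) := ω · ∫_{−τ/ω}^0 K(ωθ, x(t+θ), y(t+θ)) dθ. Then g is differentiable at every ω > 0, with g'(ω) = ∫_{−τ/ω}^0 K(ωθ, x(t+θ), y(t+θ)) dθ − (τ/ω)·K(−τ, x(t−τ/ω), y(t−τ/ω)) + ω · ∫_{−τ/ω}^0 (∂₁K)(ωθ, x(t+θ), y(t+θ)) · θ dθ, where ∂₁K denotes the partial derivative of K with respect to its first (scalar) argument. (This is the term M_X appearing in the Fréchet derivative of the rescaled right-hand side with respect to the period.) -/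

import Mathlib

open Real MeasureTheory intervalIntegral Filter Metric Topology

/-- Joint differentiability of a moving-endpoint integral with a parameter, at the point
where the moving endpoint equals the base point. -/
lemma aux_moving {E : Type*} [NormedAddCommGroup E] [NormedSpace ℝ E] [CompleteSpace E]
    {F : ℝ × ℝ → E} (hF : Continuous F) (a₀ b₀ : ℝ) :
    HasFDerivAt (fun p : ℝ × ℝ => ∫ θ in a₀..p.1, F (p.2, θ))
      ((ContinuousLinearMap.fst ℝ ℝ ℝ).smulRight (F (b₀, a₀))) (a₀, b₀) := by
  rw [hasFDerivAt_iff_isLittleO_nhds_zero]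
  rw [Asymptotics.isLittleO_iff]
  intro c hc
  rcases Metric.continuousAt_iff.1 (hF.continuousAt (x := (b₀, a₀))) c hc with ⟨δ, hδ, hball⟩
  have hev : ∀ᶠ p : ℝ × ℝ in 𝓝 0, p ∈ Metric.ball (0 : ℝ × ℝ) δ :=
    Metric.ball_mem_nhds 0 hδ
  filter_upwards [hev] with p hp
  have hp1 : |p.1| < δ := by
    have h0 := hp; rw [Metric.mem_ball, Prod.dist_eq] at h0
    have h1 : dist p.1 (0:ℝ) < δ := lt_of_le_of_lt (le_max_left _ _) h0
    simpa [Real.dist_eq] using h1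
  have hp2 : |p.2| < δ := by
    have h0 := hp; rw [Metric.mem_ball, Prod.dist_eq] at h0
    have h1 : dist p.2 (0:ℝ) < δ := lt_of_le_of_lt (le_max_right _ _) h0
    simpa [Real.dist_eq] using h1
  have hcont2 : Continuous fun θ : ℝ => F (b₀ + p.2, θ) :=
    hF.comp (by continuity)
  have hInt : IntervalIntegrable (fun θ : ℝ => F (b₀ + p.2, θ)) volume a₀ (a₀ + p.1) :=
    hcont2.intervalIntegrable _ _
  have key : (∫ θ in a₀..((a₀, b₀) + p).1, F (((a₀, b₀) + p).2, θ))
      - (∫ θ in a₀..(a₀, b₀).1, F ((a₀, b₀).2, θ))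
      - ((ContinuousLinearMap.fst ℝ ℝ ℝ).smulRight (F (b₀, a₀))) p
      = ∫ θ in a₀..(a₀ + p.1), (F (b₀ + p.2, θ) - F (b₀, a₀)) := by
    rw [show ((a₀, b₀) + p).1 = a₀ + p.1 from rfl, show ((a₀, b₀) + p).2 = b₀ + p.2 from rfl]
    rw [intervalIntegral.integral_sub hInt intervalIntegrable_const,
      intervalIntegral.integral_const, intervalIntegral.integral_same]
    simp only [ContinuousLinearMap.smulRight_apply, ContinuousLinearMap.coe_fst']
    rw [show a₀ + p.1 - a₀ = p.1 by ring]
    abel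
  rw [key]
  have hbound : ∀ θ ∈ Set.uIoc a₀ (a₀ + p.1), ‖F (b₀ + p.2, θ) - F (b₀, a₀)‖ ≤ c := by
    intro θ hθ
    have hθd : |θ - a₀| ≤ |p.1| := by
      rcases Set.mem_uIoc.1 hθ with ⟨h1, h2⟩ | ⟨h1, h2⟩
      · rw [abs_of_nonneg (by linarith)]
        have : a₀ ≤ a₀ + p.1 := le_of_lt (lt_of_lt_of_le h1 h2)
        rw [abs_of_nonneg (by linarith)]; linarith
      · rw [abs_of_nonpos (by linarith)]
        have : a₀ + p.1 ≤ a₀ := le_of_lt (lt_of_lt_of_le h1 h2)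
        rw [abs_of_nonpos (by linarith)]; linarith
    have hdist : dist ((b₀ + p.2, θ) : ℝ × ℝ) (b₀, a₀) < δ := by
      rw [Prod.dist_eq]
      refine max_lt ?_ ?_
      · simpa [Real.dist_eq] using hp2
      · rw [Real.dist_eq]; exact lt_of_le_of_lt hθd hp1
    exact le_of_lt (by simpa [dist_eq_norm] using hball hdist)
  calc ‖∫ θ in a₀..(a₀ + p.1), (F (b₀ + p.2, θ) - F (b₀, a₀))‖
      ≤ c * |(a₀ + p.1) - a₀| := intervalIntegral.norm_integral_le_of_norm_le_const hbound
    _ = c * |p.1| := by ring_nf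
    _ ≤ c * ‖p‖ := by
        have h1 : |p.1| ≤ ‖p‖ := norm_fst_le p
        nlinarith [le_of_lt hc]

/-- The main computation: derivative of `ω' ↦ ω' • ∫_{e ω'}^0 f ω' θ dθ`. -/
lemma aux_main {E : Type*} [NormedAddCommGroup E] [NormedSpace ℝ E] [CompleteSpace E]
    (f f' : ℝ → ℝ → E)
    (hfc : Continuous fun p : ℝ × ℝ => f p.1 p.2)
    (hf'c : Continuous fun p : ℝ × ℝ => f' p.1 p.2)
    (hder : ∀ b θ, HasDerivAt (fun b => f b θ) (f' b θ) b)
    (e : ℝ → ℝ) (e' ω : ℝ) (he : HasDerivAt e e' ω) :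
    HasDerivAt (fun ω' : ℝ => ω' • ∫ θ in (e ω')..0, f ω' θ)
      ((∫ θ in (e ω)..0, f ω θ)
        + ω • ((∫ θ in (e ω)..0, f' ω θ) - e' • f ω (e ω))) ω := by
  -- Step 1: fixed endpoints, derivative in the parameter
  have hG : HasDerivAt (fun b : ℝ => ∫ θ in (e ω)..0, f b θ) (∫ θ in (e ω)..0, f' ω θ) ω := by
    obtain ⟨C, hC⟩ := ((isCompact_closedBall ω 1).prod
      (isCompact_uIcc (a := e ω) (b := 0))).exists_bound_of_continuousOn hf'c.continuousOn
    have h := intervalIntegral.hasDerivAt_integral_of_dominated_loc_of_deriv_le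
      (F := f) (F' := f') (a := e ω) (b := 0) (x₀ := ω) (bound := fun _ => C) (μ := volume)
      (Metric.ball_mem_nhds ω one_pos)
      (Eventually.of_forall fun b =>
        ((hfc.comp (Continuous.prodMk_right b)).aestronglyMeasurable))
      ((hfc.comp (Continuous.prodMk_right ω)).intervalIntegrable _ _)
      ((hf'c.comp (Continuous.prodMk_right ω)).aestronglyMeasurable)
      (Eventually.of_forall fun θ hθ b hb =>
        hC (b, θ) ⟨Metric.ball_subset_closedBall hb, Set.uIoc_subset_uIcc hθ⟩)
      intervalIntegrable_const
      (Eventually.of_forall fun θ _ b _ => hder b θ)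
    exact h.2
  -- Step 2: moving endpoint, joint differentiability
  have hH : HasFDerivAt (fun p : ℝ × ℝ => ∫ θ in (e ω)..p.1, f p.2 θ)
      ((ContinuousLinearMap.fst ℝ ℝ ℝ).smulRight (f ω (e ω))) (e ω, ω) :=
    aux_moving (F := fun q : ℝ × ℝ => f q.1 q.2) hfc (e ω) ω
  -- Step 3: combine into joint differentiability of Φ(a, b) = ∫_a^0 f b
  have h1 : HasFDerivAt (fun p : ℝ × ℝ => ∫ θ in (e ω)..0, f p.2 θ)
      (((1 : ℝ →L[ℝ] ℝ).smulRight (∫ θ in (e ω)..0, f' ω θ)).comp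
        (ContinuousLinearMap.snd ℝ ℝ ℝ)) (e ω, ω) :=
    (HasFDerivAt.comp (g := fun b : ℝ => ∫ θ in (e ω)..0, f b θ) (f := Prod.snd) (e ω, ω)
      (hasDerivAt_iff_hasFDerivAt.mp hG) hasFDerivAt_snd).congr_fderiv
      (ContinuousLinearMap.ext fun q => by simp)
  have heq : ∀ p : ℝ × ℝ, (∫ θ in p.1..0, f p.2 θ)
      = (∫ θ in (e ω)..0, f p.2 θ) - ∫ θ in (e ω)..p.1, f p.2 θ := by
    intro p
    have hcf : Continuous (f p.2) := hfc.comp (Continuous.prodMk_right p.2)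
    rw [intervalIntegral.integral_interval_sub_left (hcf.intervalIntegrable _ _)
      (hcf.intervalIntegrable _ _)]
  have hΦ : HasFDerivAt (fun p : ℝ × ℝ => ∫ θ in p.1..0, f p.2 θ)
      ((((1 : ℝ →L[ℝ] ℝ).smulRight (∫ θ in (e ω)..0, f' ω θ)).comp
        (ContinuousLinearMap.snd ℝ ℝ ℝ))
        - (ContinuousLinearMap.fst ℝ ℝ ℝ).smulRight (f ω (e ω))) (e ω, ω) :=
    (h1.sub hH).congr_of_eventuallyEq (Eventually.of_forall heq)
  -- Step 4: chain rule along ω' ↦ (e ω', ω') and product rule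
  have hc : HasDerivAt (fun ω' : ℝ => ((e ω', ω') : ℝ × ℝ)) (e', 1) ω :=
    he.prodMk (hasDerivAt_id ω)
  have hcomp := hΦ.comp_hasDerivAt_of_eq ω hc rfl
  have hfinal := (hasDerivAt_id ω).smul hcomp
  refine hfinal.congr_deriv ?_
  symm
  simp only [id_eq, ContinuousLinearMap.sub_apply, ContinuousLinearMap.comp_apply,
    ContinuousLinearMap.coe_snd', ContinuousLinearMap.coe_fst',
    ContinuousLinearMap.smulRight_apply, ContinuousLinearMap.one_apply, one_smul,
    smul_sub, Function.comp_apply]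
  abel

theorem stmt5 (d : ℕ) (hd : 1 ≤ d) (τ : ℝ) (hτ : 0 < τ)
    (K : ℝ × (Fin d → ℝ) × (Fin d → ℝ) → Fin d → ℝ) (hK : ContDiff ℝ 1 K)
    (x y : ℝ → Fin d → ℝ) (hx : Continuous x) (hy : Continuous y)
    (t ω : ℝ) (hω : 0 < ω) :
    HasDerivAt
      (fun ω' : ℝ => ω' • ∫ θ in (-(τ/ω'))..0, K (ω' * θ, x (t + θ), y (t + θ)))
      ((∫ θ in (-(τ/ω))..0, K (ω * θ, x (t + θ), y (t + θ)))
        - (τ/ω) • K (-τ, x (t - τ/ω), y (t - τ/ω))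
        + ω • ∫ θ in (-(τ/ω))..0,
            θ • deriv (fun s : ℝ => K (s, x (t + θ), y (t + θ))) (ω * θ)) ω := by
  have hωne : ω ≠ 0 := ne_of_gt hω
  have hD₁cont : Continuous fun p : ℝ × (Fin d → ℝ) × (Fin d → ℝ) =>
      fderiv ℝ K p (1, 0, 0) :=
    (hK.continuous_fderiv one_ne_zero).clm_apply continuous_const
  -- derivative in the scalar slot
  have hslot : ∀ (u v : Fin d → ℝ) (s : ℝ),
      HasDerivAt (fun s : ℝ => K (s, u, v)) (fderiv ℝ K (s, u, v) (1, 0, 0)) s := by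
    intro u v s
    have hcurve : HasDerivAt (fun s : ℝ => ((s, u, v) : ℝ × (Fin d → ℝ) × (Fin d → ℝ)))
        ((1, 0, 0) : ℝ × (Fin d → ℝ) × (Fin d → ℝ)) s :=
      (hasDerivAt_id s).prodMk (hasDerivAt_const s (u, v))
    exact ((hK.differentiable one_ne_zero (s, u, v)).hasFDerivAt).comp_hasDerivAt s hcurve
  have hslotb : ∀ (θ b : ℝ),
      HasDerivAt (fun b : ℝ => K (b * θ, x (t + θ), y (t + θ)))
        (θ • fderiv ℝ K (b * θ, x (t + θ), y (t + θ)) (1, 0, 0)) b := by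
    intro θ b
    have h := (hslot (x (t + θ)) (y (t + θ)) (b * θ)).scomp b (hasDerivAt_mul_const θ)
    simpa [smul_smul, Function.comp_def] using h
  have hxyc : Continuous fun p : ℝ × ℝ =>
      ((p.1 * p.2, x (t + p.2), y (t + p.2)) : ℝ × (Fin d → ℝ) × (Fin d → ℝ)) :=
    (continuous_fst.mul continuous_snd).prodMk
      ((hx.comp (continuous_const.add continuous_snd)).prodMk
        (hy.comp (continuous_const.add continuous_snd)))
  have he : HasDerivAt (fun ω' : ℝ => -(τ/ω')) (τ/ω^2) ω := by
    have h1 := ((hasDerivAt_inv hωne).const_mul τ).neg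
    have h2 : -(τ * -(ω^2)⁻¹) = τ/ω^2 := by field_simp
    rw [h2] at h1
    simpa [div_eq_mul_inv, Pi.neg_def] using h1
  have hmain := aux_main
    (f := fun b θ => K (b * θ, x (t + θ), y (t + θ)))
    (f' := fun b θ => θ • fderiv ℝ K (b * θ, x (t + θ), y (t + θ)) (1, 0, 0))
    (hK.continuous.comp hxyc)
    (continuous_snd.smul (hD₁cont.comp hxyc))
    (fun b θ => hslotb θ b)
    (fun ω' : ℝ => -(τ/ω')) (τ/ω^2) ω he
  refine hmain.congr_deriv ?_
  symm
  have hK1 : K (ω * -(τ/ω), x (t + -(τ/ω)), y (t + -(τ/ω)))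
      = K (-τ, x (t - τ/ω), y (t - τ/ω)) := by
    rw [show ω * -(τ/ω) = -τ by (field_simp), show t + -(τ/ω) = t - τ/ω by ring]
  have hI : (∫ θ in (-(τ/ω))..0, θ • deriv (fun s : ℝ => K (s, x (t + θ), y (t + θ))) (ω * θ))
      = ∫ θ in (-(τ/ω))..0, θ • fderiv ℝ K (ω * θ, x (t + θ), y (t + θ)) (1, 0, 0) := by
    refine intervalIntegral.integral_congr fun θ _ => ?_
    rw [(hslot (x (t + θ)) (y (t + θ)) (ω * θ)).deriv]
  rw [hI, ← hK1]
  rw [smul_sub, smul_smul, show ω * (τ/ω^2) = τ/ω by (field_simp)]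
  abel
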